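/- Let X₂ = (2A−1)·2^{k} with A, k natural numbers, 1 ≤ k ≤ w−1, and let p = (2B−1)·2^r ± 1 with B a natural number and 2 ≤ r ≤ w−1. Then the orbit of X₂ under iteration of the map x ↦ T_p(x) modulo 2^w has period exactly max(2^{w−k−r}, 1). -/

import Mathlib

open Polynomial Polynomial.Chebyshev

theorem U_mul_T' (R : Type*) [CommRing R] (m k : ℤ) :
    2 * U R m * T R k = U R (m + k) + U R (m - k) := by
  induction k using Polynomial.Chebyshev.induct with
  | zero => simp [two_mul]
  | one =>
    have h₁ := U_add_one R m
    rw [T_one]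
    linear_combination (norm := ring_nf) -h₁
  | add_two k ih1 ih2 =>
    have h₁ := U_add_two R (m + k)
    have h₂ := U_sub_two R (m - k)
    have h₃ := T_add_two R k
    linear_combination (norm := ring_nf) 2 * U R m * h₃ - h₂ - h₁ - ih2 + 2 * (X : R[X]) * ih1
  | neg_add_one k ih1 ih2 =>
    have h₁ := U_add_two R (m + (-k - 1))
    have h₂ := U_sub_two R (m - (-k - 1))
    have h₃ := T_add_two R (-k - 1)
    linear_combination (norm := ring_nf) 2 * U R m * h₃ - h₂ - h₁ - ih2 + 2 * (X : R[X]) * ih1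

theorem T_odd_id (R : Type*) [CommRing R] (c : ℤ) :
    T R (2 * c + 1) = X + 2 * (X ^ 2 - 1) * U R (c - 1) * U R c := by
  have h1 := U_mul_T' R c (c + 1)
  have h2 := U_mul_T' R c c
  have h3 := one_sub_X_sq_mul_U_eq_pol_in_T R (c - 1)
  have h4 := T_eq_U_sub_X_mul_U R (2 * c + 1)
  have e1 : c - (c + 1) = -1 := by ring
  have e2 : c - c = 0 := by ring
  have e3 : c + (c + 1) = 2 * c + 1 := by ring
  have e4 : c + c = 2 * c := by ring
  have e5 : c - 1 + 1 = c := by ring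
  have e6 : c - 1 + 2 = c + 1 := by ring
  have e7 : 2 * c + 1 - 1 = 2 * c := by ring
  rw [e1, e3, U_neg_one] at h1
  rw [e2, e4, U_zero] at h2
  rw [e5, e6] at h3
  rw [e7] at h4
  linear_combination (norm := ring_nf) h4 - h1 + X * h2 + 2 * U R c * h3

noncomputable def tEv (x n : ℤ) : ℤ := (Polynomial.Chebyshev.T ℤ n).eval x
noncomputable def sEv (x n : ℤ) : ℤ := (Polynomial.Chebyshev.U ℤ (n - 1)).eval x

lemma tEv_one (x : ℤ) : tEv x 1 = x := by simp [tEv]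

lemma tEv_two_mul (x n : ℤ) : tEv x (2 * n) = 2 * (tEv x n) ^ 2 - 1 := by
  have h := T_mul_T ℤ n n
  rw [show n + n = 2 * n by ring, show n - n = 0 by ring, T_zero] at h
  have h2 := congrArg (Polynomial.eval x) h
  simp only [Polynomial.eval_mul, Polynomial.eval_add, Polynomial.eval_one,
    Polynomial.eval_ofNat] at h2
  unfold tEv
  linear_combination -h2

lemma tEv_odd_idx (x n : ℤ) :
    tEv x (2 * n + 1) = 2 * tEv x (n + 1) * tEv x n - x := by
  have h := T_mul_T ℤ (n + 1) n
  rw [show n + 1 + n = 2 * n + 1 by ring, show n + 1 - n = 1 by ring, T_one] at h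
  have h2 := congrArg (Polynomial.eval x) h
  simp only [Polynomial.eval_mul, Polynomial.eval_add, Polynomial.eval_X,
    Polynomial.eval_ofNat] at h2
  unfold tEv
  linear_combination -h2

lemma sEv_two_mul (x n : ℤ) : sEv x (2 * n) = 2 * sEv x n * tEv x n := by
  have h := U_mul_T' ℤ (n - 1) n
  rw [show n - 1 + n = 2 * n - 1 by ring, show n - 1 - n = -1 by ring, U_neg_one] at h
  have h2 := congrArg (Polynomial.eval x) h
  simp only [Polynomial.eval_mul, Polynomial.eval_add, Polynomial.eval_zero,
    Polynomial.eval_ofNat] at h2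
  unfold sEv tEv
  linear_combination -h2

lemma sEv_odd_idx (x n : ℤ) :
    sEv x (2 * n + 1) = 2 * sEv x (n + 1) * tEv x n - 1 := by
  have h := U_mul_T' ℤ n n
  rw [show n + n = 2 * n by ring, show n - n = 0 by ring, U_zero] at h
  have h2 := congrArg (Polynomial.eval x) h
  simp only [Polynomial.eval_mul, Polynomial.eval_add, Polynomial.eval_one,
    Polynomial.eval_ofNat] at h2
  unfold sEv tEv
  rw [show 2 * n + 1 - 1 = 2 * n by ring, show n + 1 - 1 = n by ring]
  linear_combination -h2

lemma tEv_sub_self (x c : ℤ) :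
    tEv x (2 * c + 1) - x = 2 * (x ^ 2 - 1) * sEv x c * sEv x (c + 1) := by
  have h2 := congrArg (Polynomial.eval x) (T_odd_id ℤ c)
  simp only [Polynomial.eval_mul, Polynomial.eval_add, Polynomial.eval_sub,
    Polynomial.eval_pow, Polynomial.eval_X, Polynomial.eval_one,
    Polynomial.eval_ofNat] at h2
  unfold tEv sEv
  rw [show c + 1 - 1 = c by ring]
  linear_combination h2

lemma odd_tEv_even (x n : ℤ) : Odd (tEv x (2 * n)) := by
  rw [tEv_two_mul]
  exact ⟨(tEv x n) ^ 2 - 1, by ring⟩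

lemma odd_sEv_odd (x n : ℤ) : Odd (sEv x (2 * n + 1)) := by
  rw [sEv_odd_idx]
  exact ⟨sEv x (n + 1) * tEv x n - 1, by ring⟩

lemma tEv_odd_val (x aZ : ℤ) (k : ℕ) (ha : Odd aZ) (hx : x = aZ * 2 ^ k) :
    ∀ n : ℕ, Odd n → ∃ e : ℤ, Odd e ∧ tEv x (n : ℤ) = e * 2 ^ k := by
  intro n
  induction n using Nat.strong_induction_on with
  | _ n IH =>
  intro hn
  obtain ⟨m, rfl⟩ := hn
  rcases Nat.eq_zero_or_pos m with rfl | hm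
  · refine ⟨aZ, ha, ?_⟩
    norm_num [tEv_one, hx]
  · have key : tEv x ((2 * m + 1 : ℕ) : ℤ) = 2 * tEv x ((m : ℤ) + 1) * tEv x (m : ℤ) - x := by
      push_cast
      exact tEv_odd_idx x (m : ℤ)
    rcases Nat.even_or_odd m with he | ho
    · obtain ⟨j, hj⟩ := he
      have hoddm : Odd (tEv x (m : ℤ)) := by
        have : (m : ℤ) = 2 * (j : ℤ) := by push_cast [hj]; ring
        rw [this]; exact odd_tEv_even x j
      obtain ⟨e, he1, he2⟩ := IH (m + 1) (by omega) ⟨j, by omega⟩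
      have hcast : tEv x ((m : ℤ) + 1) = e * 2 ^ k := by
        have : ((m + 1 : ℕ) : ℤ) = (m : ℤ) + 1 := by push_cast; ring
        rw [← this]; exact he2
      refine ⟨2 * e * tEv x (m : ℤ) - aZ, ?_, ?_⟩
      · exact (Even.sub_odd ⟨e * tEv x (m : ℤ), by ring⟩ ha)
      · rw [key, hcast, hx]; ring
    · obtain ⟨e, he1, he2⟩ := IH m (by omega) ho
      have hoddm1 : Odd (tEv x ((m : ℤ) + 1)) := by
        obtain ⟨j, hj⟩ := ho
        have : (m : ℤ) + 1 = 2 * ((j : ℤ) + 1) := by push_cast [hj]; ring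
        rw [this]; exact odd_tEv_even x _
      refine ⟨2 * e * tEv x ((m : ℤ) + 1) - aZ, ?_, ?_⟩
      · exact (Even.sub_odd ⟨e * tEv x ((m : ℤ) + 1), by ring⟩ ha)
      · rw [key, he2]; rw [hx]; ring

lemma sEv_even_val (x aZ : ℤ) (k : ℕ) (ha : Odd aZ) (hk : 1 ≤ k) (hx : x = aZ * 2 ^ k) :
    ∀ t : ℕ, 1 ≤ t → ∀ u : ℕ, Odd u →
      ∃ e : ℤ, Odd e ∧ sEv x (2 ^ t * (u : ℤ)) = e * 2 ^ (k + t) := by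
  intro t
  induction t with
  | zero => omega
  | succ t IHt =>
  intro _ u hu
  rcases Nat.eq_zero_or_pos t with rfl | ht
  · -- t = 1 : sEv (2u) = 2 sEv u tEv u, u odd
    obtain ⟨m, hm⟩ := hu
    have h := sEv_two_mul x (u : ℤ)
    have hs : Odd (sEv x (u : ℤ)) := by
      have : (u : ℤ) = 2 * (m : ℤ) + 1 := by push_cast [hm]; ring
      rw [this]; exact odd_sEv_odd x m
    obtain ⟨e, he1, he2⟩ := tEv_odd_val x aZ k ha hx u ⟨m, hm⟩
    refine ⟨sEv x (u : ℤ) * e, hs.mul he1, ?_⟩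
    rw [show (2 : ℤ) ^ (0 + 1) * (u : ℤ) = 2 * (u : ℤ) by ring, h, he2]
    ring
  · obtain ⟨e, he1, he2⟩ := IHt ht u hu
    have hoddT : Odd (tEv x (2 ^ t * (u : ℤ))) := by
      have : (2 : ℤ) ^ t * (u : ℤ) = 2 * (2 ^ (t - 1) * (u : ℤ)) := by
        rw [← mul_assoc, ← pow_succ']
        congr 2
        omega
      rw [this]; exact odd_tEv_even x _
    have h := sEv_two_mul x (2 ^ t * (u : ℤ))
    refine ⟨e * tEv x (2 ^ t * (u : ℤ)), he1.mul hoddT, ?_⟩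
    rw [show (2 : ℤ) ^ (t + 1) * (u : ℤ) = 2 * (2 ^ t * (u : ℤ)) by ring, h, he2]
    ring

lemma odd_int_cast_zmod2 (n : ℤ) (h : Odd n) : ((n : ZMod 2)) = 1 := by
  obtain ⟨m, rfl⟩ := h
  push_cast
  rw [show (2 : ZMod 2) = 0 from rfl]
  ring

lemma odd_nat_cast_zmod2 (n : ℕ) (h : Odd n) : ((n : ZMod 2)) = 1 := by
  obtain ⟨m, rfl⟩ := h
  push_cast
  rw [show (2 : ZMod 2) = 0 from rfl]
  ring

lemma odd_geom_sum (P d : ℤ) (hP : Odd P) (hd : Odd d) (u : ℕ) (hu : Odd u) :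
    Odd (∑ i ∈ Finset.range u, P ^ i * d ^ (u - 1 - i)) := by
  set S := ∑ i ∈ Finset.range u, P ^ i * d ^ (u - 1 - i) with hS
  have h1 : ((S : ZMod 2)) = 1 := by
    rw [hS]
    push_cast
    rw [Finset.sum_congr rfl (fun i _ => by
      rw [odd_int_cast_zmod2 P hP, odd_int_cast_zmod2 d hd, one_pow, one_pow, one_mul])]
    simp only [Finset.sum_const, Finset.card_range, nsmul_eq_mul, mul_one]
    exact odd_nat_cast_zmod2 u hu
  rw [← Int.not_even_iff_odd]
  intro hev
  obtain ⟨c, hc⟩ := hev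
  have h2 : ((S : ZMod 2)) = 0 := by
    rw [hc]
    have : ((c + c : ℤ) : ZMod 2) = (2 : ZMod 2) * (c : ZMod 2) := by push_cast; ring
    rw [this, show (2 : ZMod 2) = 0 from rfl, zero_mul]
  rw [h1] at h2
  exact one_ne_zero h2

lemma lte_base (B r : ℕ) (δ : ℤ) (hB : 1 ≤ B) (hr : 2 ≤ r) (hδ : δ = 1 ∨ δ = -1)
    (u : ℕ) (hu : Odd u) :
    ∃ c : ℤ, Odd c ∧ ((2 * (B : ℤ) - 1) * 2 ^ r + δ) ^ u = δ ^ u + c * 2 ^ r := by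
  set P : ℤ := (2 * (B : ℤ) - 1) * 2 ^ r + δ with hP
  have hgeo := geom_sum₂_mul P δ u
  have hPsub : P - δ = (2 * (B : ℤ) - 1) * 2 ^ r := by rw [hP]; ring
  have h2r : (2 : ℤ) ^ r = 2 * 2 ^ (r - 1) := by
    rw [← pow_succ']; congr 1; omega
  have hPodd : Odd P := by
    rcases hδ with rfl | rfl
    · exact ⟨(2 * (B : ℤ) - 1) * 2 ^ (r - 1), by rw [hP, h2r]; ring⟩
    · exact ⟨(2 * (B : ℤ) - 1) * 2 ^ (r - 1) - 1, by rw [hP, h2r]; ring⟩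
  have hdodd : Odd δ := by
    rcases hδ with rfl | rfl
    · exact odd_one
    · exact ⟨-1, by ring⟩
  refine ⟨(∑ i ∈ Finset.range u, P ^ i * δ ^ (u - 1 - i)) * (2 * (B : ℤ) - 1), ?_, ?_⟩
  · exact (odd_geom_sum P δ hPodd hdodd u hu).mul ⟨(B : ℤ) - 1, by ring⟩
  · rw [mul_assoc, ← hPsub, hgeo]
    ring

lemma lte_pow (B r : ℕ) (δ : ℤ) (hB : 1 ≤ B) (hr : 2 ≤ r) (hδ : δ = 1 ∨ δ = -1) :
    ∀ a : ℕ, ∀ u : ℕ, Odd u →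
      ∃ c : ℤ, Odd c ∧ ((2 * (B : ℤ) - 1) * 2 ^ r + δ) ^ (2 ^ a * u)
        = δ ^ (2 ^ a * u) + c * 2 ^ (r + a) := by
  intro a
  induction a with
  | zero =>
    intro u hu
    simpa using lte_base B r δ hB hr hδ u hu
  | succ a IH =>
    intro u hu
    obtain ⟨c, hc, hpc⟩ := IH u hu
    set P : ℤ := (2 * (B : ℤ) - 1) * 2 ^ r + δ with hP
    set n : ℕ := 2 ^ a * u with hn
    have hδodd : Odd (δ ^ n) := by
      rcases hδ with rfl | rfl
      · simpa using odd_one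
      · exact Odd.pow ⟨-1, by ring⟩
    refine ⟨δ ^ n * c + c ^ 2 * 2 ^ (r + a - 1), ?_, ?_⟩
    · refine (hδodd.mul hc).add_even ⟨c ^ 2 * 2 ^ (r + a - 2), ?_⟩
      rw [show r + a - 1 = (r + a - 2) + 1 by omega]
      ring
    · have h1 : 2 ^ (a + 1) * u = n * 2 := by rw [hn]; ring
      clear_value n
      rw [h1, pow_mul, pow_mul, hpc]
      have h2 : (2 : ℤ) ^ (r + a) * 2 ^ (r + a) = 2 ^ (r + a - 1) * 2 ^ (r + (a + 1)) := by
        rw [← pow_add, ← pow_add]; congr 1; omega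
      have h3 : (2 : ℤ) ^ (r + (a + 1)) = 2 * 2 ^ (r + a) := by
        rw [show r + (a + 1) = (r + a) + 1 by omega, pow_succ]; ring
      linear_combination c ^ 2 * h2 + δ ^ n * c * h3

lemma two_pow_dvd_odd_mul_iff (E : ℤ) (hE : Odd E) (w v : ℕ) :
    (2 : ℤ) ^ w ∣ E * 2 ^ v ↔ w ≤ v := by
  constructor
  · intro h
    by_contra hlt
    push_neg at hlt
    have h2 : (2 : ℤ) ^ (v + 1) ∣ E * 2 ^ v :=
      dvd_trans (pow_dvd_pow 2 (by omega)) h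
    obtain ⟨d, hd⟩ := h2
    have hE2 : E = 2 * d := by
      have h3 : E * 2 ^ v = (2 * d) * 2 ^ v := by rw [hd, pow_succ]; ring
      exact mul_right_cancel₀ (pow_ne_zero v two_ne_zero) h3
    rw [Int.odd_iff] at hE
    omega
  · intro h
    exact Dvd.dvd.mul_left (pow_dvd_pow 2 h) E

lemma main_val (A B k r : ℕ) (hA : 1 ≤ A) (hB : 1 ≤ B) (hk : 1 ≤ k) (hr : 2 ≤ r)
    (δ : ℤ) (hδ : δ = 1 ∨ δ = -1) (a u : ℕ) (hu : Odd u) :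
    ∃ E : ℤ, Odd E ∧
      tEv ((2 * (A : ℤ) - 1) * 2 ^ k) (((2 * (B : ℤ) - 1) * 2 ^ r + δ) ^ (2 ^ a * u))
        - (2 * (A : ℤ) - 1) * 2 ^ k = E * 2 ^ (k + r + a) := by
  set x : ℤ := (2 * (A : ℤ) - 1) * 2 ^ k with hxdef
  set P : ℤ := (2 * (B : ℤ) - 1) * 2 ^ r + δ with hP
  set n : ℕ := 2 ^ a * u with hn
  have hn1 : 1 ≤ n := by
    have h1 := hu.pos
    have h2 : 1 ≤ 2 ^ a := Nat.one_le_two_pow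
    calc 1 = 1 * 1 := by norm_num
    _ ≤ 2 ^ a * u := Nat.mul_le_mul h2 h1
  obtain ⟨c, hc, hpc⟩ := lte_pow B r δ hB hr hδ a u hu
  have hδn : δ ^ n = 1 ∨ δ ^ n = -1 := by
    rcases hδ with rfl | rfl
    · left; simp
    · rcases Nat.even_or_odd n with h | h
      · left; exact h.neg_one_pow
      · right; exact h.neg_one_pow
  have hP3 : (3 : ℤ) ≤ P := by
    have h1 : (1 : ℤ) ≤ 2 * (B : ℤ) - 1 := by
      have : (1 : ℤ) ≤ (B : ℤ) := by exact_mod_cast hB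
      linarith
    have h2 : (4 : ℤ) ≤ 2 ^ r := by
      calc (4 : ℤ) = 2 ^ 2 := by norm_num
      _ ≤ 2 ^ r := pow_le_pow_right₀ (by norm_num) hr
    have h3 : (4 : ℤ) ≤ (2 * (B : ℤ) - 1) * 2 ^ r := by nlinarith
    have h4 : (-1 : ℤ) ≤ δ := by rcases hδ with rfl | rfl <;> norm_num
    rw [hP]; linarith
  have hq3 : (3 : ℤ) ≤ P ^ n :=
    le_trans hP3 (le_self_pow₀ (by linarith) (by omega))
  have ht1 : 1 ≤ r + a - 1 := by omega
  set t : ℕ := r + a - 1 with hT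
  have h2N : (2 : ℤ) ^ (r + a) = 2 * 2 ^ t := by
    rw [← pow_succ']; congr 1; omega
  have h2t : (2 : ℤ) ^ t = 2 * 2 ^ (t - 1) := by
    rw [← pow_succ']; congr 1; omega
  have hxa : Odd (2 * (A : ℤ) - 1) := ⟨(A : ℤ) - 1, by ring⟩
  have hxeven : Even x := ⟨(2 * (A : ℤ) - 1) * 2 ^ (k - 1), by
    rw [hxdef, show (2 : ℤ) ^ k = 2 * 2 ^ (k - 1) from by rw [← pow_succ']; congr 1; omega]
    ring⟩
  have hx2 : Odd (x ^ 2 - 1) := by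
    have : Even (x ^ 2) := by rw [sq]; exact hxeven.mul_right x
    exact this.sub_odd odd_one
  have hfin : (2 : ℤ) ^ (k + r + a) = 2 ^ (k + t) * 2 := by
    rw [← pow_succ]; congr 1; omega
  rcases hδn with h1 | h1
  · have hc1 : 1 ≤ c := by
      have hpow : (0 : ℤ) < 2 ^ (r + a) := by positivity
      nlinarith [hpc]
    have hq : P ^ n = 2 * (c * 2 ^ t) + 1 := by rw [hpc, h1, h2N]; ring
    have hkey := tEv_sub_self x (c * 2 ^ t)
    rw [← hq] at hkey
    have hct : (c.toNat : ℤ) = c := Int.toNat_of_nonneg (by linarith)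
    have hcodd : Odd c.toNat := by
      rwa [← Int.odd_coe_nat, hct]
    obtain ⟨e, he1, he2⟩ := sEv_even_val x (2 * (A : ℤ) - 1) k hxa hk hxdef t ht1 c.toNat hcodd
    have hidx : (2 : ℤ) ^ t * (c.toNat : ℤ) = c * 2 ^ t := by rw [hct]; ring
    rw [hidx] at he2
    have hsodd : Odd (sEv x (c * 2 ^ t + 1)) := by
      have heq : c * 2 ^ t + 1 = 2 * (c * 2 ^ (t - 1)) + 1 := by rw [h2t]; ring
      rw [heq]; exact odd_sEv_odd x _
    refine ⟨(x ^ 2 - 1) * e * sEv x (c * 2 ^ t + 1), (hx2.mul he1).mul hsodd, ?_⟩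
    rw [hkey, he2, hfin]; ring
  · have hc1 : 1 ≤ c := by
      have hpow : (0 : ℤ) < 2 ^ (r + a) := by positivity
      nlinarith [hpc]
    have hq : P ^ n = 2 * (c * 2 ^ t - 1) + 1 := by rw [hpc, h1, h2N]; ring
    have hkey := tEv_sub_self x (c * 2 ^ t - 1)
    rw [← hq] at hkey
    have hct : (c.toNat : ℤ) = c := Int.toNat_of_nonneg (by linarith)
    have hcodd : Odd c.toNat := by
      rwa [← Int.odd_coe_nat, hct]
    obtain ⟨e, he1, he2⟩ := sEv_even_val x (2 * (A : ℤ) - 1) k hxa hk hxdef t ht1 c.toNat hcodd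
    have hidx : c * 2 ^ t - 1 + 1 = 2 ^ t * (c.toNat : ℤ) := by rw [hct]; ring
    rw [hidx, he2] at hkey
    have hsodd : Odd (sEv x (c * 2 ^ t - 1)) := by
      have heq : c * 2 ^ t - 1 = 2 * (c * 2 ^ (t - 1) - 1) + 1 := by rw [h2t]; ring
      rw [heq]; exact odd_sEv_odd x _
    refine ⟨(x ^ 2 - 1) * sEv x (c * 2 ^ t - 1) * e, (hx2.mul hsodd).mul he1, ?_⟩
    rw [hkey, hfin]; ring



/-- Let `X₂ = (2A−1)·2^k` with `A ≥ 1`, `1 ≤ k ≤ w−1`, and let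
`p = (2B−1)·2^r ± 1` with `B ≥ 1`, `2 ≤ r ≤ w−1`. Then the orbit of `X₂` under
`x ↦ T_p(x)` on `ℤ/2^wℤ` has period exactly `max (2^{w−k−r}) 1`. -/
theorem chebyshev_orbital_period_X2 (w A B k r : ℕ) (hA : 1 ≤ A) (hB : 1 ≤ B)
    (hk : 1 ≤ k) (hkw : k ≤ w - 1) (hr : 2 ≤ r) (hrw : r ≤ w - 1) (hw : 1 ≤ w)
    (δ : ℤ) (hδ : δ = 1 ∨ δ = -1) :
    Function.minimalPeriod
        (fun x : ZMod (2 ^ w) =>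
          (Polynomial.Chebyshev.T (ZMod (2 ^ w)) ((2 * (B : ℤ) - 1) * 2 ^ r + δ)).eval x)
        (((2 * (A : ℤ) - 1) * 2 ^ k : ℤ) : ZMod (2 ^ w)) =
      max (2 ^ (w - k - r)) 1 := by
  haveI : NeZero (2 ^ w) := ⟨(pow_pos (by norm_num : (0:ℕ) < 2) w).ne'⟩
  set P : ℤ := (2 * (B : ℤ) - 1) * 2 ^ r + δ with hPdef
  set x : ℤ := (2 * (A : ℤ) - 1) * 2 ^ k with hxdef
  set f : ZMod (2 ^ w) → ZMod (2 ^ w) :=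
    fun y : ZMod (2 ^ w) => (Polynomial.Chebyshev.T (ZMod (2 ^ w)) P).eval y with hf
  have evalcast : ∀ (m y : ℤ),
      (Polynomial.Chebyshev.T (ZMod (2 ^ w)) m).eval ((y : ℤ) : ZMod (2 ^ w))
        = (((Polynomial.Chebyshev.T ℤ m).eval y : ℤ) : ZMod (2 ^ w)) := by
    intro m y
    rw [← Polynomial.Chebyshev.map_T (Int.castRingHom (ZMod (2 ^ w))) m, Polynomial.eval_map]
    exact Polynomial.eval₂_at_apply (Int.castRingHom (ZMod (2 ^ w))) y
  have hiter : ∀ n : ℕ, f^[n] ((x : ℤ) : ZMod (2 ^ w)) = ((tEv x (P ^ n) : ℤ) : ZMod (2 ^ w)) := by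
    intro n
    induction n with
    | zero => simp [tEv_one]
    | succ n ih =>
      rw [Function.iterate_succ_apply', ih]
      simp only [hf]
      rw [evalcast P (tEv x (P ^ n))]
      congr 1
      unfold tEv
      rw [pow_succ' P n, Polynomial.Chebyshev.T_mul, Polynomial.eval_comp]
  have hcond : ∀ n : ℕ, Function.IsPeriodicPt f n ((x : ℤ) : ZMod (2 ^ w))
      ↔ ((2 : ℤ) ^ w ∣ tEv x (P ^ n) - x) := by
    intro n
    have : Function.IsPeriodicPt f n ((x : ℤ) : ZMod (2 ^ w))
        ↔ f^[n] ((x : ℤ) : ZMod (2 ^ w)) = ((x : ℤ) : ZMod (2 ^ w)) := Iff.rfl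
    rw [this, hiter n, ← sub_eq_zero, ← Int.cast_sub, ZMod.intCast_zmod_eq_zero_iff_dvd,
      show (((2 : ℕ) ^ w : ℕ) : ℤ) = (2 : ℤ) ^ w by push_cast; ring]
  have hchar : ∀ a u : ℕ, Odd u →
      (Function.IsPeriodicPt f (2 ^ a * u) ((x : ℤ) : ZMod (2 ^ w)) ↔ w ≤ k + r + a) := by
    intro a u hu
    obtain ⟨E, hE, hEq⟩ := main_val A B k r hA hB hk hr δ hδ a u hu
    rw [← hPdef, ← hxdef] at hEq
    rw [hcond, hEq, two_pow_dvd_odd_mul_iff E hE w (k + r + a)]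
  have hper : Function.IsPeriodicPt f (2 ^ (w - k - r)) ((x : ℤ) : ZMod (2 ^ w)) := by
    have h := (hchar (w - k - r) 1 odd_one).mpr (by omega)
    simpa using h
  have hmp_dvd := hper.minimalPeriod_dvd
  obtain ⟨j, hj, hmj⟩ := (Nat.dvd_prime_pow Nat.prime_two).mp hmp_dvd
  have hje : j = w - k - r := by
    by_contra hne
    have hjlt : j < w - k - r := by omega
    have hp2 : Function.IsPeriodicPt f (2 ^ j) ((x : ℤ) : ZMod (2 ^ w)) :=
      hmj ▸ Function.isPeriodicPt_minimalPeriod f _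
    have := (hchar j 1 odd_one).mp (by simpa using hp2)
    omega
  rw [hmj, hje, max_eq_left Nat.one_le_two_pow]
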